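/- Let R be a commutative ring, d ≥ 1 an integer, and b_0, …, b_d elements of R. Let M be the (d+1)×d matrix (rows indexed 0,…,d, columns indexed 0,…,d−1) whose column c has entry −b_{c+1} in row c, entry b_c in row c+1, and zeros elsewhere. For each j with 0 ≤ j ≤ d, let M_j be the d×d matrix obtained from M by deleting row j. Then det M_j = (−1)^j · b_j · ∏_{i=1}^{d−1} b_i. -/

import Mathlib

/-- Proposition 2.5: deleting row `j` from the `(d+1) × d` bidiagonal matrix whose
column `c` has `-b (c+1)` in row `c` and `b c` in row `c+1` yields a square matrix
with determinant `(-1)^j · b_j · b_1 b_2 ⋯ b_{d-1}`. -/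
theorem stmt_6 (R : Type*) [CommRing R] (d : ℕ) (hd : 1 ≤ d) (b : ℕ → R)
    (j : Fin (d + 1)) :
    (Matrix.of fun a c : Fin d =>
        if ((j.succAbove a : Fin (d + 1)) : ℕ) = (c : ℕ) then -b ((c : ℕ) + 1)
        else if ((j.succAbove a : Fin (d + 1)) : ℕ) = (c : ℕ) + 1 then b (c : ℕ)
        else 0).det
      = (-1) ^ (j : ℕ) * b (j : ℕ) * ∏ i ∈ Finset.Icc 1 (d - 1), b i := by
  classical
  set k := (j : ℕ) with hkdef
  have hk : k ≤ d := Nat.lt_succ_iff.mp j.isLt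
  set M : Matrix (Fin d) (Fin d) R := Matrix.of fun a c : Fin d =>
        if ((j.succAbove a : Fin (d + 1)) : ℕ) = (c : ℕ) then -b ((c : ℕ) + 1)
        else if ((j.succAbove a : Fin (d + 1)) : ℕ) = (c : ℕ) + 1 then b (c : ℕ)
        else 0 with hM
  have hsa : ∀ a : Fin d, ((j.succAbove a : Fin (d + 1)) : ℕ)
      = if (a : ℕ) < k then (a : ℕ) else (a : ℕ) + 1 := by
    intro a
    rcases lt_or_ge (a : ℕ) k with h | h
    · rw [Fin.succAbove_of_castSucc_lt, if_pos h]
      · simp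
      · simpa [Fin.lt_def] using h
    · rw [Fin.succAbove_of_le_castSucc, if_neg (not_lt.mpr h)]
      · simp
      · simpa [Fin.le_def] using h
  have hMval : ∀ a c : Fin d, M a c =
      if (a : ℕ) < k then
        (if (a : ℕ) = (c : ℕ) then -b ((c : ℕ) + 1)
          else if (a : ℕ) = (c : ℕ) + 1 then b (c : ℕ) else 0)
      else
        (if (a : ℕ) + 1 = (c : ℕ) then -b ((c : ℕ) + 1)
          else if (a : ℕ) = (c : ℕ) then b (c : ℕ) else 0) := by
    intro a c
    rcases lt_or_ge (a : ℕ) k with h | h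
    · simp [hM, hsa a, h]
    · simp [hM, hsa a, not_lt.mpr h]
  -- block decomposition
  let e : Fin k ⊕ Fin (d - k) ≃ Fin d :=
    finSumFinEquiv.trans (finCongr (Nat.add_sub_cancel' hk))
  have he1 : ∀ a : Fin k, ((e (Sum.inl a) : Fin d) : ℕ) = (a : ℕ) := by
    intro a; simp [e]
  have he2 : ∀ a : Fin (d - k), ((e (Sum.inr a) : Fin d) : ℕ) = k + (a : ℕ) := by
    intro a; simp [e]
  let A : Matrix (Fin k) (Fin k) R := fun a c =>
    if (a : ℕ) = (c : ℕ) then -b ((c : ℕ) + 1)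
      else if (a : ℕ) = (c : ℕ) + 1 then b (c : ℕ) else 0
  let D : Matrix (Fin (d - k)) (Fin (d - k)) R := fun a c =>
    if (a : ℕ) + 1 = (c : ℕ) then -b (k + (c : ℕ) + 1)
      else if (a : ℕ) = (c : ℕ) then b (k + (c : ℕ)) else 0
  have hsub : M.submatrix e e = Matrix.fromBlocks A 0 0 D := by
    ext a c
    rcases a with a | a <;> rcases c with c | c <;>
      simp only [Matrix.submatrix_apply, Matrix.fromBlocks_apply₁₁,
        Matrix.fromBlocks_apply₁₂, Matrix.fromBlocks_apply₂₁,
        Matrix.fromBlocks_apply₂₂, hMval, he1, he2, A, D]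
    · have : (a : ℕ) < k := a.isLt
      simp [this, Matrix.fromBlocks]
    · have h1 : (a : ℕ) < k := a.isLt
      have h2 : ¬ (a : ℕ) = k + (c : ℕ) := by omega
      have h3 : ¬ (a : ℕ) = k + (c : ℕ) + 1 := by omega
      simp [h1, h2, h3, Matrix.fromBlocks]
    · have h1 : ¬ k + (a : ℕ) < k := by omega
      have h2 : ¬ k + (a : ℕ) + 1 = (c : ℕ) := by have := c.isLt; omega
      have h3 : ¬ k + (a : ℕ) = (c : ℕ) := by have := c.isLt; omega
      simp [h1, h2, h3, Matrix.fromBlocks]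
    · have h1 : ¬ k + (a : ℕ) < k := by omega
      have h2 : (k + (a : ℕ) + 1 = k + (c : ℕ)) ↔ ((a : ℕ) + 1 = (c : ℕ)) := by omega
      have h3 : (k + (a : ℕ) = k + (c : ℕ)) ↔ ((a : ℕ) = (c : ℕ)) := by omega
      simp only [h1, if_false, h2, h3, Matrix.fromBlocks, Matrix.of_apply, Sum.elim_inr]
  have hdet : M.det = A.det * D.det := by
    rw [← Matrix.det_submatrix_equiv_self e M, hsub, Matrix.det_fromBlocks_zero₁₂]
  have hA : A.det = ∏ a : Fin k, (-b ((a : ℕ) + 1)) := by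
    rw [Matrix.det_of_lowerTriangular A]
    · exact Finset.prod_congr rfl (by intro a _; simp [A])
    · intro x y h
      have : (x : ℕ) < (y : ℕ) := h
      have h1 : ¬ (x : ℕ) = (y : ℕ) := by omega
      have h2 : ¬ (x : ℕ) = (y : ℕ) + 1 := by omega
      simp [A, h1, h2]
  have hD : D.det = ∏ a : Fin (d - k), b (k + (a : ℕ)) := by
    rw [Matrix.det_of_upperTriangular]
    · exact Finset.prod_congr rfl (by intro a _; simp [D])
    · intro x y h
      have : (y : ℕ) < (x : ℕ) := h
      have h1 : ¬ (x : ℕ) + 1 = (y : ℕ) := by omega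
      have h2 : ¬ (x : ℕ) = (y : ℕ) := by omega
      simp [D, h1, h2]
  have hA' : A.det = (-1) ^ k * ∏ i ∈ Finset.Ico 1 (k + 1), b i := by
    rw [hA, Fin.prod_univ_eq_prod_range (fun a => -b (a + 1)) k]
    have h1 : ∀ a ∈ Finset.range k, -b (a + 1) = (-1) * b (a + 1) := by
      intro a _; ring
    rw [Finset.prod_congr rfl h1, Finset.prod_mul_distrib, Finset.prod_const,
      Finset.card_range]
    congr 1
    rw [Finset.prod_Ico_eq_prod_range]
    simp [add_comm]
  have hD' : D.det = ∏ i ∈ Finset.Ico k d, b i := by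
    rw [hD, Fin.prod_univ_eq_prod_range (fun a => b (k + a)) (d - k),
      Finset.prod_Ico_eq_prod_range]
  have hIcc : Finset.Icc 1 (d - 1) = Finset.Ico 1 d := by
    ext x; simp [Finset.mem_Icc, Finset.mem_Ico]; omega
  rw [hdet, hA', hD', hIcc]
  rcases Nat.eq_zero_or_pos k with hk0 | hk1
  · rw [hk0, Finset.prod_eq_prod_Ico_succ_bot (by omega : 0 < d) b]
    simp
  · have hsplit : ∏ i ∈ Finset.Ico 1 (k + 1), b i
        = (∏ i ∈ Finset.Ico 1 k, b i) * b k :=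
      Finset.prod_Ico_succ_top hk1 b
    have hjoin : (∏ i ∈ Finset.Ico 1 k, b i) * ∏ i ∈ Finset.Ico k d, b i
        = ∏ i ∈ Finset.Ico 1 d, b i :=
      Finset.prod_Ico_consecutive b hk1 hk
    rw [hsplit]
    calc ((-1 : R) ^ k * ((∏ i ∈ Finset.Ico 1 k, b i) * b k)) * ∏ i ∈ Finset.Ico k d, b i
        = (-1) ^ k * b k * ((∏ i ∈ Finset.Ico 1 k, b i) * ∏ i ∈ Finset.Ico k d, b i) := by
          ring
      _ = (-1) ^ k * b k * ∏ i ∈ Finset.Ico 1 d, b i := by rw [hjoin]
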